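/- Let ε_max > 0, let W : (0, ε_max) → ℝ⁴ be a family of time-like vectors, let U ∈ ℝ⁴ with η(U, U) = -1, and for each ε define the Newtonian velocity v(ε) = -W(ε)/η(W(ε), U) - U. Then η(v(ε), v(ε)) → 1 as ε → 0⁺ if and only if |η(W(ε), U)| / ‖W(ε)‖ → ∞ as ε → 0⁺ (i.e. if and only if W is ultra-relativistic with respect to U). -/

import Mathlib

open Filter Topology

/-- The Minkowski bilinear form on ℝ⁴. -/
noncomputable def eta (x y : Fin 4 → ℝ) : ℝ :=
  -(x 0 * y 0) + x 1 * y 1 + x 2 * y 2 + x 3 * y 3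

/-- The Minkowski "norm" ‖x‖ = √(-η(x,x)) of a time-like (or light-like) vector. -/
noncomputable def mnorm (x : Fin 4 → ℝ) : ℝ := Real.sqrt (-(eta x x))

/-- The Newtonian velocity of `W` relative to an observer `U`. -/
noncomputable def newtVel (U W : Fin 4 → ℝ) : Fin 4 → ℝ :=
  -(eta W U)⁻¹ • W - U

lemma eta_ne_zero (W U : Fin 4 → ℝ) (hW : eta W W < 0) (hU : eta U U = -1) :
    eta W U ≠ 0 := by
  intro h
  simp only [eta] at h hU hW
  have ht : (0:ℝ) ≤ U 1 * U 1 + U 2 * U 2 + U 3 * U 3 := by nlinarith [sq_nonneg (U 1), sq_nonneg (U 2), sq_nonneg (U 3)]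
  have h1 : W 1 * W 1 + W 2 * W 2 + W 3 * W 3 < W 0 * W 0 := by linarith
  have hW0 : 0 < W 0 * W 0 := by nlinarith [sq_nonneg (W 1), sq_nonneg (W 2), sq_nonneg (W 3)]
  have hp : W 0 * U 0 = W 1 * U 1 + W 2 * U 2 + W 3 * U 3 := by linarith
  have key : (W 0 * U 0) ^ 2 ≤
      (W 1 * W 1 + W 2 * W 2 + W 3 * W 3) * (U 1 * U 1 + U 2 * U 2 + U 3 * U 3) := by
    rw [hp]
    nlinarith [sq_nonneg (W 1 * U 2 - W 2 * U 1), sq_nonneg (W 1 * U 3 - W 3 * U 1),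
      sq_nonneg (W 2 * U 3 - W 3 * U 2)]
  have h2 : U 0 * U 0 = 1 + (U 1 * U 1 + U 2 * U 2 + U 3 * U 3) := by linarith
  have h4 : (W 0 * W 0) * (U 0 * U 0)
      = (W 0 * W 0) * (1 + (U 1 * U 1 + U 2 * U 2 + U 3 * U 3)) := by rw [h2]
  have hmul := mul_le_mul_of_nonneg_right h1.le ht
  nlinarith [key, hW0, hmul, h4]

lemma eta_expand (c : ℝ) (W U : Fin 4 → ℝ) :
    eta (c • W - U) (c • W - U) = c ^ 2 * eta W W - 2 * c * eta W U + eta U U := by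
  simp only [eta, Pi.sub_apply, Pi.smul_apply, smul_eq_mul]
  ring

lemma eta_newtVel (W U : Fin 4 → ℝ) (ha : eta W U ≠ 0) (hU : eta U U = -1) :
    eta (newtVel U W) (newtVel U W) = 1 + eta W W / (eta W U) ^ 2 := by
  have : newtVel U W = (-(eta W U)⁻¹) • W - U := rfl
  rw [this, eta_expand, hU]
  field_simp
  ring

theorem newtonian_speed_to_one_iff_ultra_relativistic
    (εmax : ℝ) (hεmax : 0 < εmax) (W : ℝ → Fin 4 → ℝ)
    (hW : ∀ ε ∈ Set.Ioo (0:ℝ) εmax, eta (W ε) (W ε) < 0)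
    (U : Fin 4 → ℝ) (hU : eta U U = -1) :
    Tendsto (fun ε => eta (newtVel U (W ε)) (newtVel U (W ε))) (𝓝[>] (0:ℝ)) (𝓝 1)
      ↔ Tendsto (fun ε => |eta (W ε) U| / mnorm (W ε)) (𝓝[>] (0:ℝ)) atTop := by
  set F : ℝ → ℝ := fun ε => mnorm (W ε) / |eta (W ε) U| with hF
  have hmem : Set.Ioo (0:ℝ) εmax ∈ 𝓝[>] (0:ℝ) :=
    Ioo_mem_nhdsGT_of_mem ⟨le_refl 0, hεmax⟩
  have hFpos : ∀ᶠ ε in 𝓝[>] (0:ℝ), 0 < F ε := by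
    filter_upwards [hmem] with ε hε
    have h1 := hW ε hε
    have h2 := eta_ne_zero _ _ h1 hU
    exact div_pos (Real.sqrt_pos.2 (by linarith)) (abs_pos.2 h2)
  have heq : ∀ᶠ ε in 𝓝[>] (0:ℝ),
      eta (newtVel U (W ε)) (newtVel U (W ε)) = 1 - F ε ^ 2 := by
    filter_upwards [hmem] with ε hε
    have h1 := hW ε hε
    have h2 := eta_ne_zero _ _ h1 hU
    rw [eta_newtVel _ _ h2 hU, hF]
    have : mnorm (W ε) ^ 2 = -(eta (W ε) (W ε)) := by
      rw [mnorm, Real.sq_sqrt (by linarith)]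
    rw [div_pow, this, sq_abs]
    ring
  have hinv : ∀ᶠ ε in 𝓝[>] (0:ℝ), (F ε)⁻¹ = |eta (W ε) U| / mnorm (W ε) := by
    filter_upwards [hFpos] with ε hε
    rw [hF]
    simp [inv_div]
  rw [tendsto_congr' heq, ← tendsto_congr' hinv]
  constructor
  · intro h
    have hsq : Tendsto (fun ε => F ε ^ 2) (𝓝[>] (0:ℝ)) (𝓝 0) := by
      have := h.const_sub 1
      simpa using this
    have hF0 : Tendsto F (𝓝[>] (0:ℝ)) (𝓝 0) := by
      have hs : Tendsto (fun ε => Real.sqrt (F ε ^ 2)) (𝓝[>] (0:ℝ)) (𝓝 0) := by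
        simpa [Function.comp_def] using (Real.continuous_sqrt.continuousAt.tendsto.comp hsq)
      refine hs.congr' ?_
      filter_upwards [hFpos] with ε hε
      rw [Real.sqrt_sq hε.le]
    have : Tendsto F (𝓝[>] (0:ℝ)) (𝓝[>] 0) :=
      tendsto_nhdsWithin_iff.2 ⟨hF0, hFpos⟩
    exact this.inv_tendsto_nhdsGT_zero
  · intro h
    have hF0 : Tendsto F (𝓝[>] (0:ℝ)) (𝓝 0) := by
      have := h.inv_tendsto_atTop
      refine this.congr' ?_
      filter_upwards [hFpos] with ε hε
      simp
    have hsq : Tendsto (fun ε => F ε ^ 2) (𝓝[>] (0:ℝ)) (𝓝 0) := by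
      simpa using hF0.pow 2
    have := hsq.const_sub 1
    simpa using this
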